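/- arXiv:2605.29594 — 3 statements merged into one kernel-verified Lean document; each statement's English description precedes it below -/
import Mathlib

section
/- Second moment identity for planar orthogonal polynomials: let n ≥ 2 and let w : ℂ → [0,∞) be measurable with ∫_ℂ (1+|z|)^{2n+4}·w(z) dA(z) < ∞. Let P_0, …, P_{n+2} be a monic orthogonal family up to degree n+2 for w. Then ∫_ℂ z²·|P_n(z)|²·w(z) dA(z) = (ℬ_n − ℬ_{n+2} − (𝒜_n − 𝒜_{n+2})·𝒜_{n+1})·h_n. -/
open MeasureTheory
open Polynomial

/-- The planar area measure `dA` on `ℂ`: two-dimensional Lebesgue measure divided by `π`. -/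
noncomputable def dA : Measure ℂ :=
  (ENNReal.ofReal (1 / Real.pi)) • (volume : Measure ℂ)

/-- The Coulomb gas partition function
`𝒵_N(V) = ∫_{ℂ^N} ∏_{j<k} |z_j − z_k|² ∏_j e^{−N·V(z_j)} dA(z_j)`. -/
noncomputable def Zpart (N : ℕ) (V : ℂ → ℝ) : ℝ :=
  ∫ z : Fin N → ℂ,
    (∏ p ∈ Finset.univ.filter (fun p : Fin N × Fin N => p.1 < p.2),
      ‖z p.1 - z p.2‖ ^ 2) *
    ∏ j, Real.exp (-(N : ℝ) * V (z j)) ∂(Measure.pi fun _ => dA)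

/-- `P_0, …, P_M` is a monic orthogonal family up to degree `M` for the weight `w`:
each `P_n` is monic of degree `n`, and
`∫_ℂ P_n(z)·conj(P_m(z))·w(z) dA(z) = h_n·δ_{nm}` with `0 < h_n < ∞`. -/
def MonicOrth (M : ℕ) (w : ℂ → ℝ) (P : ℕ → Polynomial ℂ) (h : ℕ → ℝ) : Prop :=
  (∀ n, n ≤ M → (P n).Monic ∧ (P n).natDegree = n) ∧
  (∀ n, n ≤ M → 0 < h n) ∧
  (∀ n, n ≤ M → ∀ m, m ≤ M →
    ∫ z : ℂ, (P n).eval z * (starRingEnd ℂ) ((P m).eval z) * (w z : ℂ) ∂dA =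
      if n = m then (h n : ℝ) else 0)


lemma poly_bound (p : Polynomial ℂ) (d : ℕ) (hd : p.natDegree ≤ d) :
    ∃ C : ℝ, 0 ≤ C ∧ ∀ z : ℂ, ‖p.eval z‖ ≤ C * (1 + ‖z‖) ^ d := by
  refine ⟨∑ i ∈ Finset.range (p.natDegree + 1), ‖p.coeff i‖, ?_, ?_⟩
  · exact Finset.sum_nonneg fun i _ => (norm_nonneg _)
  · intro z
    rw [Polynomial.eval_eq_sum_range, Finset.sum_mul]
    refine le_trans (norm_sum_le _ _) (Finset.sum_le_sum fun i hi => ?_)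
    rw [norm_mul, norm_pow]
    have h2 : ‖z‖ ^ i ≤ (1 + ‖z‖) ^ d := by
      calc ‖z‖ ^ i ≤ (1 + ‖z‖) ^ i :=
            pow_le_pow_left₀ (norm_nonneg z) (by linarith [norm_nonneg z]) i
        _ ≤ (1 + ‖z‖) ^ d := by
            apply pow_le_pow_right₀ (by linarith [norm_nonneg z])
            have := Finset.mem_range.mp hi
            omega
    exact mul_le_mul_of_nonneg_left h2 (norm_nonneg _)

lemma aux_span (M : ℕ) (P : ℕ → Polynomial ℂ)
    (hP : ∀ k, k ≤ M → (P k).Monic ∧ (P k).natDegree = k) :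
    ∀ q : Polynomial ℂ, q.natDegree ≤ M →
      ∃ c : ℕ → ℂ, q = ∑ k ∈ Finset.range (M + 1), Polynomial.C (c k) * P k := by
  suffices H : ∀ d : ℕ, ∀ q : Polynomial ℂ, q.natDegree ≤ M → q.natDegree < d →
      ∃ c : ℕ → ℂ, q = ∑ k ∈ Finset.range (M + 1), Polynomial.C (c k) * P k by
    intro q hq; exact H (q.natDegree + 1) q hq (Nat.lt_succ_self _)
  intro d
  induction d with
  | zero => intro q _ h; omega
  | succ d ih =>
    intro q hqM hqd
    by_cases hq0 : q = 0
    · exact ⟨0, by simp [hq0]⟩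
    set m := q.natDegree with hm
    have hPm := hP m hqM
    have hmem : m ∈ Finset.range (M + 1) := Finset.mem_range.mpr (by omega)
    have hlead : q.leadingCoeff = (Polynomial.C q.leadingCoeff * P m).leadingCoeff := by
      rw [leadingCoeff_mul, leadingCoeff_C, hPm.1.leadingCoeff, mul_one]
    have hlc0 : q.leadingCoeff ≠ 0 := leadingCoeff_ne_zero.mpr hq0
    have hdeg : q.degree = (Polynomial.C q.leadingCoeff * P m).degree := by
      rw [degree_C_mul hlc0, degree_eq_natDegree hq0, degree_eq_natDegree hPm.1.ne_zero,
        hPm.2]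
    have hlt : (q - Polynomial.C q.leadingCoeff * P m).degree < q.degree :=
      degree_sub_lt hdeg hq0 hlead
    set q' := q - Polynomial.C q.leadingCoeff * P m with hq'
    by_cases hq'0 : q' = 0
    · refine ⟨fun k => if k = m then q.leadingCoeff else 0, ?_⟩
      have hsum : ∑ k ∈ Finset.range (M + 1),
          Polynomial.C (if k = m then q.leadingCoeff else 0) * P k
          = Polynomial.C q.leadingCoeff * P m := by
        rw [Finset.sum_eq_single_of_mem m hmem]
        · rw [if_pos rfl]
        · intro k _ hk; rw [if_neg hk, map_zero, zero_mul]
      rw [hsum]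
      exact sub_eq_zero.mp hq'0
    · have hlt' : q'.natDegree < m := Polynomial.natDegree_lt_natDegree hq'0 hlt
      obtain ⟨c', hc'⟩ := ih q' (by omega) (by omega)
      refine ⟨fun k => c' k + if k = m then q.leadingCoeff else 0, ?_⟩
      have hsum : ∑ k ∈ Finset.range (M + 1),
          Polynomial.C (c' k + if k = m then q.leadingCoeff else 0) * P k
          = (∑ k ∈ Finset.range (M + 1), Polynomial.C (c' k) * P k)
            + Polynomial.C q.leadingCoeff * P m := by
        have : ∀ k ∈ Finset.range (M + 1),
            Polynomial.C (c' k + if k = m then q.leadingCoeff else 0) * P k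
            = Polynomial.C (c' k) * P k
              + (if k = m then Polynomial.C q.leadingCoeff * P m else 0) := by
          intro k _
          rw [map_add, add_mul]
          congr 1
          split
          · next hk => rw [hk]
          · simp
        rw [Finset.sum_congr rfl this, Finset.sum_add_distrib,
          Finset.sum_ite_eq' (Finset.range (M+1)) m, if_pos hmem]
      rw [hsum, ← hc']
      exact (sub_add_cancel q _).symm


lemma aux_integrable (n : ℕ) (w : ℂ → ℝ) (hw : Measurable w) (hw0 : ∀ z, 0 ≤ w z)
    (hint : Integrable (fun z : ℂ => (1 + ‖z‖) ^ (2 * n + 4) * w z) dA)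
    (p q : Polynomial ℂ) (hp : p.natDegree ≤ n + 2) (hq : q.natDegree ≤ n + 2) :
    Integrable (fun z : ℂ => p.eval z * (starRingEnd ℂ) (q.eval z) * (w z : ℂ)) dA := by
  obtain ⟨C1, hC1, hb1⟩ := poly_bound p (n + 2) hp
  obtain ⟨C2, hC2, hb2⟩ := poly_bound q (n + 2) hq
  refine Integrable.mono (hint.const_mul (C1 * C2)) ?_ ?_
  · refine Measurable.aestronglyMeasurable ?_
    exact ((p.continuous_aeval.measurable).mul
      ((Complex.continuous_conj.comp q.continuous_aeval).measurable)).mul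
      (Complex.measurable_ofReal.comp hw)
  · refine Filter.Eventually.of_forall fun z => ?_
    have ha : (0:ℝ) ≤ 1 + ‖z‖ := by positivity
    have hnorm : ‖p.eval z * (starRingEnd ℂ) (q.eval z) * (w z : ℂ)‖
        = ‖p.eval z‖ * ‖q.eval z‖ * w z := by
      rw [norm_mul, norm_mul, Complex.norm_conj, Complex.norm_real, Real.norm_eq_abs,
        abs_of_nonneg (hw0 z)]
    rw [hnorm, Real.norm_eq_abs]
    have hrhs : C1 * C2 * ((1 + ‖z‖) ^ (2 * n + 4) * w z)
        = (C1 * (1 + ‖z‖) ^ (n + 2)) * (C2 * (1 + ‖z‖) ^ (n + 2)) * w z := by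
      rw [show 2 * n + 4 = (n + 2) + (n + 2) by ring, pow_add]; ring
    have hle : ‖p.eval z‖ * ‖q.eval z‖ * w z
        ≤ C1 * C2 * ((1 + ‖z‖) ^ (2 * n + 4) * w z) := by
      rw [hrhs]
      have := mul_le_mul (hb1 z) (hb2 z) (norm_nonneg _) (by positivity)
      exact mul_le_mul_of_nonneg_right this (hw0 z)
    exact hle.trans (le_abs_self _)

lemma aux_orth (n : ℕ) (hn : 2 ≤ n) (w : ℂ → ℝ) (hw : Measurable w) (hw0 : ∀ z, 0 ≤ w z)
    (hint : Integrable (fun z : ℂ => (1 + ‖z‖) ^ (2 * n + 4) * w z) dA)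
    (P : ℕ → Polynomial ℂ) (h : ℕ → ℝ) (hfam : MonicOrth (n + 2) w P h)
    (q : Polynomial ℂ) (hqd : q.natDegree ≤ n - 1) :
    ∫ z : ℂ, q.eval z * (starRingEnd ℂ) ((P n).eval z) * (w z : ℂ) ∂dA = 0 := by
  obtain ⟨c, hc⟩ := aux_span (n - 1) P (fun k hk => hfam.1 k (by omega)) q hqd
  have hfun : (fun z : ℂ => q.eval z * (starRingEnd ℂ) ((P n).eval z) * (w z : ℂ))
      = fun z : ℂ => ∑ k ∈ Finset.range (n - 1 + 1),
        (Polynomial.C (c k) * P k).eval z * (starRingEnd ℂ) ((P n).eval z) * (w z : ℂ) := by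
    funext z
    rw [hc, Polynomial.eval_finset_sum, Finset.sum_mul, Finset.sum_mul]
  rw [hfun, integral_finset_sum]
  · refine Finset.sum_eq_zero fun k hk => ?_
    have hk' : k ≤ n - 1 := by
      have := Finset.mem_range.mp hk; omega
    have hdk : (Polynomial.C (c k) * P k).natDegree ≤ n + 2 := by
      refine le_trans (natDegree_mul_le) ?_
      rw [natDegree_C, (hfam.1 k (by omega)).2]; omega
    have heq : (fun z : ℂ =>
        (Polynomial.C (c k) * P k).eval z * (starRingEnd ℂ) ((P n).eval z) * (w z : ℂ))
        = fun z : ℂ => c k * ((P k).eval z * (starRingEnd ℂ) ((P n).eval z) * (w z : ℂ)) := by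
      funext z; rw [eval_mul, eval_C]; ring
    rw [heq, integral_const_mul, hfam.2.2 k (by omega) n (by omega), if_neg (by omega)]; simp
  · intro k hk
    have hk' : k ≤ n - 1 := by have := Finset.mem_range.mp hk; omega
    refine aux_integrable n w hw hw0 hint _ _ ?_ ?_
    · refine le_trans (natDegree_mul_le) ?_
      rw [natDegree_C, (hfam.1 k (by omega)).2]; omega
    · rw [(hfam.1 n (by omega)).2]; omega

/-- Second moment identity for planar orthogonal polynomials:
`∫_ℂ z²·|P_n(z)|²·w(z) dA(z) = (ℬ_n − ℬ_{n+2} − (𝒜_n − 𝒜_{n+2})·𝒜_{n+1})·h_n`. -/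
theorem second_moment_identity
    (n : ℕ) (hn : 2 ≤ n) (w : ℂ → ℝ) (hw : Measurable w) (hw0 : ∀ z, 0 ≤ w z)
    (hint : Integrable (fun z : ℂ => (1 + ‖z‖) ^ (2 * n + 4) * w z) dA)
    (P : ℕ → Polynomial ℂ) (h : ℕ → ℝ)
    (hfam : MonicOrth (n + 2) w P h) :
    ∫ z : ℂ, z ^ 2 * ((‖(P n).eval z‖ ^ 2 * w z : ℝ) : ℂ) ∂dA =
      ((P n).coeff (n - 2) - (P (n + 2)).coeff n
        - ((P n).coeff (n - 1) - (P (n + 2)).coeff (n + 1)) * (P (n + 1)).coeff n) *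
        (h n : ℝ) := by
  -- abbreviations
  set A1 := (P n).coeff (n - 1) with hA1
  set A2 := (P (n + 1)).coeff n with hA2
  set A3 := (P (n + 2)).coeff (n + 1) with hA3
  set B1 := (P n).coeff (n - 2) with hB1
  set B3 := (P (n + 2)).coeff n with hB3
  set c1 := A1 - A3 with hc1
  set c0 := B1 - B3 - (A1 - A3) * A2 with hc0
  -- monicity / degree facts
  have hPn := hfam.1 n (by omega)
  have hPn1 := hfam.1 (n + 1) (by omega)
  have hPn2 := hfam.1 (n + 2) (by omega)
  have hcn : (P n).coeff n = 1 := by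
    have := hPn.1.coeff_natDegree; rwa [hPn.2] at this
  have hcn1 : (P (n + 1)).coeff (n + 1) = 1 := by
    have := hPn1.1.coeff_natDegree; rwa [hPn1.2] at this
  have hcn2 : (P (n + 2)).coeff (n + 2) = 1 := by
    have := hPn2.1.coeff_natDegree; rwa [hPn2.2] at this
  -- the remainder polynomial
  set r := X ^ 2 * P n - P (n + 2) - Polynomial.C c1 * P (n + 1) - Polynomial.C c0 * P n
    with hr
  have hrdeg : r.natDegree ≤ n - 1 := by
    have hdlt : r.degree < (n : ℕ) := by
      rw [Polynomial.degree_lt_iff_coeff_zero]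
      intro m hm
      have hx : (X ^ 2 * P n).coeff m = (P n).coeff (m - 2) := by
        conv_lhs => rw [show m = m - 2 + 2 by omega]
        rw [Polynomial.coeff_X_pow_mul]
      have hcm : r.coeff m = (P n).coeff (m - 2) - (P (n + 2)).coeff m
          - c1 * (P (n + 1)).coeff m - c0 * (P n).coeff m := by
        rw [hr]
        simp only [coeff_sub, coeff_C_mul, hx]
      rcases (by omega : m = n ∨ m = n + 1 ∨ m = n + 2 ∨ n + 2 < m) with h' | h' | h' | h'
      · subst h'
        rw [hcm, hcn, ← hB1, ← hB3, ← hA2, hc0, hc1]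
        ring
      · subst h'
        rw [hcm, show n + 1 - 2 = n - 1 by omega, ← hA1, ← hA3, hcn1,
          coeff_eq_zero_of_natDegree_lt (show (P n).natDegree < n + 1 by rw [hPn.2]; omega), hc1]
        ring
      · subst h'
        rw [hcm, show n + 2 - 2 = n by omega, hcn, hcn2,
          coeff_eq_zero_of_natDegree_lt (by rw [hPn1.2]; omega),
          coeff_eq_zero_of_natDegree_lt (by rw [hPn.2]; omega)]
        ring
      · rw [hcm,
          coeff_eq_zero_of_natDegree_lt (by rw [hPn.2]; omega),
          coeff_eq_zero_of_natDegree_lt (by rw [hPn2.2]; omega),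
          coeff_eq_zero_of_natDegree_lt (by rw [hPn1.2]; omega),
          coeff_eq_zero_of_natDegree_lt (by rw [hPn.2]; omega)]
        ring
    by_cases hr0 : r = 0
    · rw [hr0]; simp
    · have := (Polynomial.natDegree_lt_iff_degree_lt hr0).mpr hdlt
      omega
  -- decomposition
  have hdec : X ^ 2 * P n
      = r + P (n + 2) + Polynomial.C c1 * P (n + 1) + Polynomial.C c0 * P n := by
    rw [hr]; ring
  -- rewrite the integrand
  have hpt : (fun z : ℂ => z ^ 2 * ((‖(P n).eval z‖ ^ 2 * w z : ℝ) : ℂ))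
      = fun z : ℂ =>
        (X ^ 2 * P n).eval z * (starRingEnd ℂ) ((P n).eval z) * (w z : ℂ) := by
    funext z
    have habs : ((‖(P n).eval z‖ ^ 2 : ℝ) : ℂ)
        = (P n).eval z * (starRingEnd ℂ) ((P n).eval z) := by
      rw [Complex.sq_norm, Complex.mul_conj]
    rw [Complex.ofReal_mul, habs, eval_mul, eval_pow, eval_X]
    ring
  rw [hpt]
  -- split the integral
  have hir : Integrable
      (fun z : ℂ => r.eval z * (starRingEnd ℂ) ((P n).eval z) * (w z : ℂ)) dA :=
    aux_integrable n w hw hw0 hint r (P n) (le_trans hrdeg (by omega)) (by rw [hPn.2]; omega)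
  have hi2 : Integrable
      (fun z : ℂ => (P (n + 2)).eval z * (starRingEnd ℂ) ((P n).eval z) * (w z : ℂ)) dA :=
    aux_integrable n w hw hw0 hint _ _ (by rw [hPn2.2]) (by rw [hPn.2]; omega)
  have hi1 : Integrable
      (fun z : ℂ => (Polynomial.C c1 * P (n + 1)).eval z * (starRingEnd ℂ) ((P n).eval z)
        * (w z : ℂ)) dA :=
    aux_integrable n w hw hw0 hint _ _
      (le_trans natDegree_mul_le (by rw [natDegree_C, hPn1.2]; omega)) (by rw [hPn.2]; omega)
  have hi0 : Integrable
      (fun z : ℂ => (Polynomial.C c0 * P n).eval z * (starRingEnd ℂ) ((P n).eval z)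
        * (w z : ℂ)) dA :=
    aux_integrable n w hw hw0 hint _ _
      (le_trans natDegree_mul_le (by rw [natDegree_C, hPn.2]; omega)) (by rw [hPn.2]; omega)
  have hsplit : (fun z : ℂ =>
        (X ^ 2 * P n).eval z * (starRingEnd ℂ) ((P n).eval z) * (w z : ℂ))
      = fun z : ℂ =>
        r.eval z * (starRingEnd ℂ) ((P n).eval z) * (w z : ℂ)
        + (P (n + 2)).eval z * (starRingEnd ℂ) ((P n).eval z) * (w z : ℂ)
        + (Polynomial.C c1 * P (n + 1)).eval z * (starRingEnd ℂ) ((P n).eval z) * (w z : ℂ)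
        + (Polynomial.C c0 * P n).eval z * (starRingEnd ℂ) ((P n).eval z) * (w z : ℂ) := by
    funext z
    rw [hdec]
    simp only [eval_add]
    ring
  rw [hsplit]
  have hiA : Integrable (fun z : ℂ =>
      r.eval z * (starRingEnd ℂ) ((P n).eval z) * (w z : ℂ)
      + (P (n + 2)).eval z * (starRingEnd ℂ) ((P n).eval z) * (w z : ℂ)) dA := hir.add hi2
  have hiB : Integrable (fun z : ℂ =>
      r.eval z * (starRingEnd ℂ) ((P n).eval z) * (w z : ℂ)
      + (P (n + 2)).eval z * (starRingEnd ℂ) ((P n).eval z) * (w z : ℂ)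
      + (Polynomial.C c1 * P (n + 1)).eval z * (starRingEnd ℂ) ((P n).eval z) * (w z : ℂ)) dA :=
    hiA.add hi1
  rw [integral_add hiB hi0, integral_add hiA hi1, integral_add hir hi2]
  have e_r : ∫ z : ℂ, r.eval z * (starRingEnd ℂ) ((P n).eval z) * (w z : ℂ) ∂dA = 0 :=
    aux_orth n hn w hw hw0 hint P h hfam r hrdeg
  have e_2 : ∫ z : ℂ, (P (n + 2)).eval z * (starRingEnd ℂ) ((P n).eval z) * (w z : ℂ) ∂dA
      = 0 := by
    rw [hfam.2.2 (n + 2) (by omega) n (by omega), if_neg (by omega)]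
    simp
  have e_1 : ∫ z : ℂ, (Polynomial.C c1 * P (n + 1)).eval z * (starRingEnd ℂ) ((P n).eval z)
      * (w z : ℂ) ∂dA = 0 := by
    have : (fun z : ℂ => (Polynomial.C c1 * P (n + 1)).eval z * (starRingEnd ℂ) ((P n).eval z)
        * (w z : ℂ))
        = fun z : ℂ => c1 * ((P (n + 1)).eval z * (starRingEnd ℂ) ((P n).eval z) * (w z : ℂ)) := by
      funext z; rw [eval_mul, eval_C]; ring
    rw [this, integral_const_mul, hfam.2.2 (n + 1) (by omega) n (by omega), if_neg (by omega)]
    simp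
  have e_0 : ∫ z : ℂ, (Polynomial.C c0 * P n).eval z * (starRingEnd ℂ) ((P n).eval z)
      * (w z : ℂ) ∂dA = c0 * (h n : ℝ) := by
    have : (fun z : ℂ => (Polynomial.C c0 * P n).eval z * (starRingEnd ℂ) ((P n).eval z)
        * (w z : ℂ))
        = fun z : ℂ => c0 * ((P n).eval z * (starRingEnd ℂ) ((P n).eval z) * (w z : ℂ)) := by
      funext z; rw [eval_mul, eval_C]; ring
    rw [this, integral_const_mul, hfam.2.2 n (by omega) n (by omega), if_pos rfl]
  rw [e_r, e_2, e_1, e_0, hc0]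
  ring
end

section
/- A vanishing circle integral for holomorphic maps: let 0 < r < 1 and let ψ be holomorphic on the annulus {w ∈ ℂ : r < |w| < 1/r} with ψ'(w) ≠ 0 for every w with |w| = 1. Then ∫_𝕋 [ Re(w²·{ψ,w}) − (1 + Re(w·ψ''(w)/ψ'(w)))² + (3/2)·|1 + w·ψ''(w)/ψ'(w)|² ] · (w / |ψ'(w)|²) ds(w) = 0, as an identity of complex numbers. -/
open MeasureTheory

/-- The point `e^{iθ}` on the unit circle. -/
noncomputable def circpt (θ : ℝ) : ℂ := Complex.exp (θ * Complex.I)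

/-- The pre-Schwarzian derivative `f''/f'`. -/
noncomputable def preSchwarzian (f : ℂ → ℂ) (w : ℂ) : ℂ :=
  deriv (deriv f) w / deriv f w

/-- The Schwarzian derivative `{f, w} = f'''/f' − (3/2)(f''/f')²`. -/
noncomputable def schwarzian (f : ℂ → ℂ) (w : ℂ) : ℂ :=
  deriv (deriv (deriv f)) w / deriv f w - (3 / 2) * (deriv (deriv f) w / deriv f w) ^ 2

lemma poly_ident (w p q cp cq d : ℂ) (hd : d ≠ 0) :
    ((q + cq - 3 / 2 * (p ^ 2 + cp ^ 2)) / 2 - (1 + (p + cp) / 2) ^ 2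
        + 3 / 2 * ((1 + p) * (1 + cp))) * w / d
    = ((w * (1 + p - cp) + w * ((p + q - p ^ 2) + (cp + cq - cp ^ 2))) * (2 * d)
        + w * ((cp - p) - 1) * (2 * (p - cp)) * d) / (2 * d) ^ 2 := by
  rw [div_eq_div_iff hd (pow_ne_zero 2 (mul_ne_zero two_ne_zero hd))]
  ring

lemma re_cast (z : ℂ) : ((z.re : ℝ) : ℂ) = (z + (starRingEnd ℂ) z) / 2 := by
  rw [Complex.add_conj]; push_cast; ring

lemma abs_sq_cast (z : ℂ) : ((‖z‖ : ℝ) : ℂ) ^ 2 = z * (starRingEnd ℂ) z := by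
  rw [← Complex.ofReal_pow, Complex.sq_norm, Complex.mul_conj]

lemma hasDerivAt_circpt (θ : ℝ) : HasDerivAt circpt (circpt θ * Complex.I) θ := by
  have h0 : HasDerivAt (fun t : ℝ => (t : ℂ) * Complex.I) (1 * Complex.I) θ :=
    Complex.ofRealCLM.hasDerivAt.mul_const _
  show HasDerivAt (fun t : ℝ => Complex.exp (t * Complex.I)) _ θ
  simpa [circpt] using h0.cexp

lemma continuous_circpt : Continuous circpt :=
  Complex.continuous_exp.comp (Complex.continuous_ofReal.mul continuous_const)

/-- A vanishing circle integral for holomorphic maps: for `ψ` holomorphic on the annulus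
`{r < |w| < 1/r}` with nonvanishing derivative on the unit circle,
`∫_𝕋 [Re(w²{ψ,w}) − (1 + Re(w ψ''/ψ'))² + (3/2)|1 + w ψ''/ψ'|²]·(w/|ψ'(w)|²) ds(w) = 0`,
the circle integral being parametrised by arc length via `θ ↦ e^{iθ}`. -/
theorem vanishing_circle_integral
    (r : ℝ) (hr0 : 0 < r) (hr1 : r < 1) (ψ : ℂ → ℂ)
    (hhol : DifferentiableOn ℂ ψ {w : ℂ | r < ‖w‖ ∧ ‖w‖ < 1 / r})
    (hne : ∀ w : ℂ, ‖w‖ = 1 → deriv ψ w ≠ 0) :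
    (∫ θ in (0 : ℝ)..(2 * Real.pi),
      ((((circpt θ) ^ 2 * schwarzian ψ (circpt θ)).re
          - (1 + ((circpt θ) * preSchwarzian ψ (circpt θ)).re) ^ 2
          + (3 / 2) * ‖1 + (circpt θ) * preSchwarzian ψ (circpt θ)‖ ^ 2 : ℝ) : ℂ)
        * (circpt θ) / ((‖deriv ψ (circpt θ)‖ ^ 2 : ℝ) : ℂ)) = 0 := by
  have hUo : IsOpen {w : ℂ | r < ‖w‖ ∧ ‖w‖ < 1 / r} :=
    (isOpen_lt continuous_const continuous_norm).inter
      (isOpen_lt continuous_norm continuous_const)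
  have hAn : AnalyticOnNhd ℂ ψ {w : ℂ | r < ‖w‖ ∧ ‖w‖ < 1 / r} :=
    hhol.analyticOnNhd hUo
  have h1 := hAn.deriv
  have h2 := h1.deriv
  have h3 := h2.deriv
  have habs : ∀ θ : ℝ, ‖circpt θ‖ = 1 := fun θ => by simp [circpt, Complex.norm_exp]
  have hmem : ∀ θ : ℝ, circpt θ ∈ {w : ℂ | r < ‖w‖ ∧ ‖w‖ < 1 / r} := by
    intro θ
    refine ⟨?_, ?_⟩ <;> rw [habs θ]
    · exact hr1
    · exact one_lt_one_div hr0 hr1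
  have hA0 : ∀ θ : ℝ, deriv ψ (circpt θ) ≠ 0 := fun θ => hne _ (habs θ)
  have hcA0 : ∀ θ : ℝ, (starRingEnd ℂ) (deriv ψ (circpt θ)) ≠ 0 := fun θ => by
    simpa using hA0 θ
  -- the antiderivative
  set g : ℝ → ℂ := fun t =>
    circpt t * (Complex.I *
        ((starRingEnd ℂ) (circpt t * deriv (deriv ψ) (circpt t) / deriv ψ (circpt t))
          - circpt t * deriv (deriv ψ) (circpt t) / deriv ψ (circpt t)) - Complex.I)
      / (2 * (deriv ψ (circpt t) * (starRingEnd ℂ) (deriv ψ (circpt t)))) with hg_def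
  have key : ∀ θ : ℝ, HasDerivAt g
      (((((circpt θ) ^ 2 * schwarzian ψ (circpt θ)).re
          - (1 + ((circpt θ) * preSchwarzian ψ (circpt θ)).re) ^ 2
          + (3 / 2) * ‖1 + (circpt θ) * preSchwarzian ψ (circpt θ)‖ ^ 2 : ℝ) : ℂ)
        * (circpt θ) / ((‖deriv ψ (circpt θ)‖ ^ 2 : ℝ) : ℂ)) θ := by
    intro θ
    have he : HasDerivAt circpt (circpt θ * Complex.I) θ := hasDerivAt_circpt θ
    set w := circpt θ with hw_def
    set A := deriv ψ w with hA_def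
    set B := deriv (deriv ψ) w with hB_def
    set C := deriv (deriv (deriv ψ)) w with hC_def
    set cw := (starRingEnd ℂ) w with hcw_def
    set cA := (starRingEnd ℂ) A with hcA_def
    set cB := (starRingEnd ℂ) B with hcB_def
    set cC := (starRingEnd ℂ) C with hcC_def
    have hA0' : A ≠ 0 := hA0 θ
    have hcA0' : cA ≠ 0 := hcA0 θ
    set p : ℂ := w * B / A with hp_def
    set q : ℂ := w ^ 2 * C / A with hq_def
    set cp : ℂ := cw * cB / cA with hcp_def
    set cq : ℂ := cw ^ 2 * cC / cA with hcq_def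
    have hA' : HasDerivAt (fun t => deriv ψ (circpt t))
        ((w * Complex.I) • B) θ :=
      ((h1 _ (hmem θ)).differentiableAt.hasDerivAt).scomp θ he
    have hB' : HasDerivAt (fun t => deriv (deriv ψ) (circpt t))
        ((w * Complex.I) • C) θ :=
      ((h2 _ (hmem θ)).differentiableAt.hasDerivAt).scomp θ he
    -- the pre-Schwarzian path and its conjugate
    have hP : HasDerivAt (fun t => circpt t * deriv (deriv ψ) (circpt t) / deriv ψ (circpt t))
        (Complex.I * (p + q - p ^ 2)) θ := by
      have h := (he.mul hB').div hA' hA0'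
      refine h.congr_deriv (Eq.symm ?_)
      simp only [smul_eq_mul, hp_def, hq_def, Pi.mul_apply, ← hw_def, ← hA_def, ← hB_def]
      field_simp
    have hcP : HasDerivAt
        (fun t => (starRingEnd ℂ) (circpt t * deriv (deriv ψ) (circpt t) / deriv ψ (circpt t)))
        (-(Complex.I * (cp + cq - cp ^ 2))) θ := by
      have h := hP.star
      refine h.congr_deriv (Eq.symm ?_)
      simp only [hp_def, hq_def, hcp_def, hcq_def, hcw_def, hcA_def, hcB_def, hcC_def,
        Complex.star_def, map_mul, map_div₀, map_sub, map_add, map_pow, map_inv₀,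
        Complex.conj_I]
      ring
    have hN : HasDerivAt (fun t => Complex.I *
        ((starRingEnd ℂ) (circpt t * deriv (deriv ψ) (circpt t) / deriv ψ (circpt t))
          - circpt t * deriv (deriv ψ) (circpt t) / deriv ψ (circpt t)) - Complex.I)
        ((p + q - p ^ 2) + (cp + cq - cp ^ 2)) θ := by
      have h := ((hcP.sub hP).const_mul Complex.I).sub_const Complex.I
      refine h.congr_deriv (Eq.symm ?_)
      linear_combination ((p + q - p ^ 2) + (cp + cq - cp ^ 2)) * Complex.I_sq
    have htop : HasDerivAt (fun t => circpt t * (Complex.I *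
        ((starRingEnd ℂ) (circpt t * deriv (deriv ψ) (circpt t) / deriv ψ (circpt t))
          - circpt t * deriv (deriv ψ) (circpt t) / deriv ψ (circpt t)) - Complex.I))
        (w * (1 + p - (starRingEnd ℂ) (w * B / A))
          + w * ((p + q - p ^ 2) + (cp + cq - cp ^ 2))) θ := by
      have h := he.mul hN
      refine h.congr_deriv (Eq.symm ?_)
      linear_combination (w * (1 + p - (starRingEnd ℂ) (w * B / A))) * Complex.I_sq
    have hD : HasDerivAt (fun t => deriv ψ (circpt t) * (starRingEnd ℂ) (deriv ψ (circpt t)))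
        (Complex.I * (p - cp) * (A * cA)) θ := by
      have h := hA'.mul hA'.star
      refine h.congr_deriv (Eq.symm ?_)
      simp only [smul_eq_mul, Complex.star_def, map_mul, Complex.conj_I, hp_def, hcp_def,
        hcw_def, hcA_def, hcB_def, ← hw_def, ← hA_def]
      have hc : (starRingEnd ℂ) A ≠ 0 := hcA0'
      field_simp
      ring
    have hden := hD.const_mul (2 : ℂ)
    have hden0 : (2 : ℂ) * (A * cA) ≠ 0 :=
      mul_ne_zero two_ne_zero (mul_ne_zero hA0' hcA0')
    have hg := htop.div hden hden0
    have hgE : HasDerivAt g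
        (((w * (1 + p - cp) + w * ((p + q - p ^ 2) + (cp + cq - cp ^ 2))) * (2 * (A * cA))
          + w * ((cp - p) - 1) * (2 * (p - cp)) * (A * cA)) / (2 * (A * cA)) ^ 2) θ := by
      rw [hg_def]
      refine hg.congr_deriv (Eq.symm ?_)
      have hconj : (starRingEnd ℂ) (w * B / A) = cp := by
        simp only [hcp_def, hcw_def, hcA_def, hcB_def, map_mul, map_div₀]
      rw [hconj]
      linear_combination (2 * w * (p - cp) * ((cp - p) - 1) * (A * cA) / (2 * (A * cA)) ^ 2)
        * Complex.I_sq
    have heq : ((((w : ℂ) ^ 2 * schwarzian ψ w).re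
          - (1 + (w * preSchwarzian ψ w).re) ^ 2
          + (3 / 2) * ‖1 + w * preSchwarzian ψ w‖ ^ 2 : ℝ) : ℂ)
        * w / ((‖deriv ψ w‖ ^ 2 : ℝ) : ℂ)
        = ((w * (1 + p - cp) + w * ((p + q - p ^ 2) + (cp + cq - cp ^ 2))) * (2 * (A * cA))
          + w * ((cp - p) - 1) * (2 * (p - cp)) * (A * cA)) / (2 * (A * cA)) ^ 2 := by
      rw [← poly_ident w p q cp cq (A * cA) (mul_ne_zero hA0' hcA0')]
      simp only [schwarzian, preSchwarzian, ← hA_def, ← hB_def, ← hC_def]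
      push_cast
      rw [re_cast, re_cast, abs_sq_cast, abs_sq_cast]
      simp only [map_mul, map_div₀, map_sub, map_add, map_pow, map_one, map_ofNat,
        ← hcw_def, ← hcA_def, ← hcB_def, ← hcC_def]
      rw [hp_def, hq_def, hcp_def, hcq_def]
      ring
    rw [← heq] at hgE
    exact hgE
  have hcont : Continuous (fun θ : ℝ =>
      ((((circpt θ) ^ 2 * schwarzian ψ (circpt θ)).re
          - (1 + ((circpt θ) * preSchwarzian ψ (circpt θ)).re) ^ 2
          + (3 / 2) * ‖1 + (circpt θ) * preSchwarzian ψ (circpt θ)‖ ^ 2 : ℝ) : ℂ)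
        * (circpt θ) / ((‖deriv ψ (circpt θ)‖ ^ 2 : ℝ) : ℂ)) := by
    rw [continuous_iff_continuousAt]
    intro θ
    have hcw : ContinuousAt circpt θ := continuous_circpt.continuousAt
    have hcA : ContinuousAt (fun t => deriv ψ (circpt t)) θ :=
      ((h1 _ (hmem θ)).continuousAt).comp hcw
    have hcB : ContinuousAt (fun t => deriv (deriv ψ) (circpt t)) θ :=
      ((h2 _ (hmem θ)).continuousAt).comp hcw
    have hcC : ContinuousAt (fun t => deriv (deriv (deriv ψ)) (circpt t)) θ :=
      ((h3 _ (hmem θ)).continuousAt).comp hcw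
    have hpre : ContinuousAt (fun t => preSchwarzian ψ (circpt t)) θ := by
      simp only [preSchwarzian]; exact hcB.div hcA (hA0 θ)
    have hschw : ContinuousAt (fun t => schwarzian ψ (circpt t)) θ := by
      simp only [schwarzian]
      exact (hcC.div hcA (hA0 θ)).sub (continuousAt_const.mul ((hcB.div hcA (hA0 θ)).pow 2))
    have h1' : ContinuousAt (fun t => ((circpt t) ^ 2 * schwarzian ψ (circpt t)).re) θ :=
      Complex.continuous_re.continuousAt.comp ((hcw.pow 2).mul hschw)
    have h2' : ContinuousAt
        (fun t => (1 + ((circpt t) * preSchwarzian ψ (circpt t)).re) ^ 2) θ :=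
      (continuousAt_const.add (Complex.continuous_re.continuousAt.comp (hcw.mul hpre))).pow 2
    have h3' : ContinuousAt
        (fun t => (3 / 2 : ℝ) * ‖1 + (circpt t) * preSchwarzian ψ (circpt t)‖ ^ 2) θ :=
      continuousAt_const.mul ((continuous_norm.continuousAt.comp
        (continuousAt_const.add (hcw.mul hpre))).pow 2)
    have hnum : ContinuousAt (fun t =>
        ((((circpt t) ^ 2 * schwarzian ψ (circpt t)).re
          - (1 + ((circpt t) * preSchwarzian ψ (circpt t)).re) ^ 2
          + (3 / 2) * ‖1 + (circpt t) * preSchwarzian ψ (circpt t)‖ ^ 2 : ℝ) : ℂ)) θ :=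
      Complex.continuous_ofReal.continuousAt.comp ((h1'.sub h2').add h3')
    have hdenc : ContinuousAt
        (fun t => ((‖deriv ψ (circpt t)‖ ^ 2 : ℝ) : ℂ)) θ :=
      Complex.continuous_ofReal.continuousAt.comp
        ((continuous_norm.continuousAt.comp hcA).pow 2)
    have hden0 : ((‖deriv ψ (circpt θ)‖ ^ 2 : ℝ) : ℂ) ≠ 0 := by
      simpa using pow_ne_zero 2 (norm_ne_zero_iff.2 (hA0 θ))
    exact (hnum.mul hcw).div hdenc hden0
  have hInt : IntervalIntegrable (fun θ : ℝ =>
      ((((circpt θ) ^ 2 * schwarzian ψ (circpt θ)).re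
          - (1 + ((circpt θ) * preSchwarzian ψ (circpt θ)).re) ^ 2
          + (3 / 2) * ‖1 + (circpt θ) * preSchwarzian ψ (circpt θ)‖ ^ 2 : ℝ) : ℂ)
        * (circpt θ) / ((‖deriv ψ (circpt θ)‖ ^ 2 : ℝ) : ℂ))
      volume 0 (2 * Real.pi) := hcont.intervalIntegrable 0 (2 * Real.pi)
  rw [intervalIntegral.integral_eq_sub_of_hasDerivAt (fun t _ => key t) hInt]
  have h2pi : circpt (2 * Real.pi) = 1 := by
    rw [circpt]; push_cast; exact Complex.exp_two_pi_mul_I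
  have h0 : circpt 0 = 1 := by simp [circpt]
  rw [hg_def]
  simp only [h2pi, h0, sub_self]
end

section
/- Asymptotic expansion in 1/a of integrals against a moving power weight: for every γ ≥ 0 and every nonnegative integer L there exist real coefficients c_{j,k} (for 1 ≤ j+k ≤ L), depending only on γ and L (namely the Taylor coefficients at u = 0 of the function u ↦ |1−u|^{2γ}), such that for every Schwartz function f : ℂ → ℂ there exist C > 0 and a₀ ≥ 1 with: for all a ≥ a₀, | ∫_ℂ |1 − z/a|^{2γ}·f(z) dA(z) − ∫_ℂ f(z) dA(z) − ∑_{1 ≤ j+k ≤ L} c_{j,k}·a^{−j−k}·∫_ℂ z^j·conj(z)^k·f(z) dA(z) | ≤ C·a^{−L−1}. In particular (L = 0), ∫_ℂ |1 − z/a|^{2γ}·f(z) dA(z) = ∫_ℂ f(z) dA(z) + O(1/a) as a → ∞. -/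
open MeasureTheory

noncomputable def Complex.abs : AbsoluteValue ℂ ℝ := NormedField.toAbsoluteValue ℂ

theorem Complex.norm_eq_abs (z : ℂ) : ‖z‖ = Complex.abs z := rfl

theorem Complex.abs_ofReal (r : ℝ) : Complex.abs (r : ℂ) = |r| := by
  show ‖(r : ℂ)‖ = |r|
  simp

theorem Complex.abs_conj (z : ℂ) : Complex.abs ((starRingEnd ℂ) z) = Complex.abs z :=
  Complex.norm_conj z

theorem Complex.abs_cpow_real (x : ℂ) (y : ℝ) : Complex.abs (x ^ (y : ℂ)) = Complex.abs x ^ y :=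
  norm_cpow_real x y

theorem Complex.continuous_abs : Continuous Complex.abs := continuous_norm

theorem Complex.normSq_eq_abs (x : ℂ) : Complex.normSq x = Complex.abs x ^ 2 :=
  Complex.normSq_eq_norm_sq x

theorem Complex.abs_re_le_abs (z : ℂ) : |z.re| ≤ Complex.abs z := Complex.abs_re_le_norm z

section MPCAux
open Complex Finset

lemma gsym (γ : ℝ) : ∀ᶠ z in nhds (0:ℂ), (1-z)^(γ:ℂ)
    = (starRingEnd ℂ) ((1 - (starRingEnd ℂ) z) ^ (γ:ℂ)) := by
  filter_upwards [Metric.ball_mem_nhds (0:ℂ) one_pos] with z hz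
  have harg : (1 - (starRingEnd ℂ) z).arg ≠ Real.pi := by
    intro h
    have h2 := (Complex.arg_eq_pi_iff.mp h).1
    have : |z.re| < 1 := lt_of_le_of_lt (Complex.abs_re_le_abs z) (show ‖z‖ < 1 by simpa using hz)
    simp only [Complex.sub_re, Complex.one_re, Complex.conj_re] at h2
    linarith [abs_lt.mp this]
  have hc := Complex.cpow_conj (1 - (starRingEnd ℂ) z) (γ:ℂ) harg
  rw [Complex.conj_ofReal] at hc
  rw [hc]
  simp


lemma ofScalars_coeff (c : ℕ → ℂ) (n : ℕ) :
    (FormalMultilinearSeries.ofScalars ℂ c).coeff n = c n := by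
  simp [FormalMultilinearSeries.coeff, FormalMultilinearSeries.ofScalars, List.prod_ofFn]

lemma exists_real_coeffs (γ : ℝ) :
    ∃ b : ℕ → ℝ, b 0 = 1 ∧ ∃ p : FormalMultilinearSeries ℂ ℂ ℂ,
      HasFPowerSeriesAt (fun u : ℂ => (1-u)^(γ:ℂ)) p 0 ∧ ∀ n, p.coeff n = (b n : ℂ) := by
  have hga : AnalyticAt ℂ (fun u : ℂ => (1-u)^(γ:ℂ)) 0 := by
    apply AnalyticAt.cpow (analyticAt_const.sub analyticAt_id) analyticAt_const
    simp [Complex.mem_slitPlane_iff]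
  obtain ⟨p, hp⟩ := hga
  have hqc : ∀ n, (FormalMultilinearSeries.ofScalars ℂ (fun n => (starRingEnd ℂ) (p.coeff n))).coeff n
      = (starRingEnd ℂ) (p.coeff n) := by
    intro n
    exact ofScalars_coeff _ n
  have hsum := hasFPowerSeriesAt_iff.mp hp
  have hq' : HasFPowerSeriesAt (fun u : ℂ => (1-u)^(γ:ℂ))
      (FormalMultilinearSeries.ofScalars ℂ (fun n => (starRingEnd ℂ) (p.coeff n))) 0 := by
    rw [hasFPowerSeriesAt_iff]
    have hconj : Filter.Tendsto (fun z : ℂ => (starRingEnd ℂ) z) (nhds 0) (nhds 0) := by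
      simpa using (Complex.continuous_conj.tendsto (0:ℂ))
    filter_upwards [gsym γ, hconj.eventually hsum] with z hzsym hzsum
    have h2 := hzsum.mapL Complex.conjCLE.toContinuousLinearMap
    simp only [zero_add, ContinuousLinearEquiv.coe_coe, Complex.conjCLE_apply] at h2 ⊢
    have h3 : (starRingEnd ℂ) ((1 - (starRingEnd ℂ) z) ^ (γ:ℂ)) = (1-z)^(γ:ℂ) := hzsym.symm
    rw [h3] at h2
    simpa [hqc, smul_eq_mul, map_mul, map_pow] using h2
  have hpq := hp.eq_formalMultilinearSeries hq'
  have hreal : ∀ n, p.coeff n = (((p.coeff n).re : ℝ) : ℂ) := by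
    intro n
    have h4 : p.coeff n = (starRingEnd ℂ) (p.coeff n) := by
      conv_lhs => rw [hpq]
      exact hqc n
    have him : (p.coeff n).im = 0 := by
      have := congrArg Complex.im h4
      simp [Complex.conj_im] at this
      linarith
    exact (Complex.ext_iff.mpr ⟨by simp, by simp [him]⟩)
  obtain ⟨r, hball⟩ := hp
  have h0 : p.coeff 0 = 1 := by
    have := hball.coeff_zero (fun _ => (1:ℂ))
    simp only [sub_zero, Complex.one_cpow] at this
    rw [FormalMultilinearSeries.coeff, ← this]
    exact congrArg _ (Subsingleton.elim _ _)
  exact ⟨fun n => (p.coeff n).re, by rw [← Complex.ofReal_inj, ← hreal 0, h0]; norm_num,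
    p, ⟨r, hball⟩, hreal⟩


lemma W_eq (γ : ℝ) (u : ℂ) : ((Complex.abs (1-u) ^ (2*γ) : ℝ) : ℂ)
    = (1-u)^(γ:ℂ) * (starRingEnd ℂ) ((1-u)^(γ:ℂ)) := by
  rw [Complex.mul_conj]
  norm_cast
  rw [Complex.normSq_eq_abs, Complex.abs_cpow_real]
  rw [← Real.rpow_natCast (Complex.abs (1-u) ^ γ) 2, ← Real.rpow_mul (Complex.abs.nonneg _)]
  norm_num [mul_comm]


lemma taylor_bound (γ : ℝ) (L : ℕ) :
    ∃ b : ℕ → ℝ, b 0 = 1 ∧ ∃ δ Cδ : ℝ, 0 < δ ∧ δ ≤ 1 ∧ 0 ≤ Cδ ∧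
      ∀ u : ℂ, Complex.abs u ≤ δ →
        Complex.abs (((Complex.abs (1 - u) ^ (2 * γ) : ℝ) : ℂ) -
          ∑ p ∈ (Finset.range (L + 1) ×ˢ Finset.range (L + 1)).filter
              (fun p => p.1 + p.2 ≤ L),
            ((b p.1 * b p.2 : ℝ) : ℂ) * u ^ p.1 * ((starRingEnd ℂ) u) ^ p.2)
          ≤ Cδ * Complex.abs u ^ (L + 1) := by
  obtain ⟨b, hb0, p, hp, hbc⟩ := exists_real_coeffs γ
  have hO := (hp.isBigO_sub_partialSum_pow (L+1)).isBigOWith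
  obtain ⟨C0, hC0⟩ := hO
  rw [Asymptotics.isBigOWith_iff] at hC0
  rw [Metric.eventually_nhds_iff] at hC0
  obtain ⟨ε, hε, hball⟩ := hC0
  set g : ℂ → ℂ := fun u : ℂ => (1-u)^(γ:ℂ) with hgdef
  set P : ℂ → ℂ := fun u => ∑ k ∈ Finset.range (L+1), (b k : ℂ) * u^k with hPdef
  have hPS : ∀ y, p.partialSum (L+1) y = P y := by
    intro y
    rw [FormalMultilinearSeries.partialSum, hPdef]
    refine Finset.sum_congr rfl fun k _ => ?_
    rw [FormalMultilinearSeries.apply_eq_pow_smul_coeff, hbc k, smul_eq_mul, mul_comm]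
  set C1 : ℝ := max C0 0 with hC1def
  have hC1 : 0 ≤ C1 := le_max_right _ _
  set δ : ℝ := min (ε/2) 1 with hδdef
  have hδpos : 0 < δ := lt_min (by linarith) one_pos
  have hδ1 : δ ≤ 1 := min_le_right _ _
  have hgP : ∀ u : ℂ, Complex.abs u ≤ δ → Complex.abs (g u - P u) ≤ C1 * Complex.abs u ^ (L+1) := by
    intro u hu
    have hd : dist u 0 < ε := by
      rw [dist_zero_right, Complex.norm_eq_abs]
      calc Complex.abs u ≤ δ := hu
        _ ≤ ε/2 := min_le_left _ _
        _ < ε := by linarith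
    have := hball hd
    rw [zero_add, hPS] at this
    rw [Complex.norm_eq_abs, norm_pow, Complex.norm_eq_abs] at this
    calc Complex.abs (g u - P u) ≤ C0 * ‖Complex.abs u‖ ^ (L+1) := this
      _ ≤ C1 * Complex.abs u ^ (L+1) := by
          rw [Real.norm_eq_abs, _root_.abs_of_nonneg (Complex.abs.nonneg u)]
          exact mul_le_mul_of_nonneg_right (le_max_left _ _) (by positivity)
  set Mp : ℝ := ∑ k ∈ Finset.range (L+1), |b k| with hMpdef
  have hMp0 : 0 ≤ Mp := Finset.sum_nonneg fun k _ => abs_nonneg _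
  have hPbd : ∀ u : ℂ, Complex.abs u ≤ δ → Complex.abs (P u) ≤ Mp := by
    intro u hu
    refine (Complex.abs.sum_le _ _).trans ?_
    refine Finset.sum_le_sum fun k _ => ?_
    rw [map_mul, map_pow, Complex.abs_ofReal]
    calc |b k| * Complex.abs u ^ k ≤ |b k| * 1 := by
          refine mul_le_mul_of_nonneg_left ?_ (abs_nonneg _)
          exact pow_le_one₀ (Complex.abs.nonneg _) (hu.trans hδ1)
      _ = |b k| := mul_one _
  have hgbd : ∀ u : ℂ, Complex.abs u ≤ δ → Complex.abs (g u) ≤ Mp + C1 := by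
    intro u hu
    calc Complex.abs (g u) = Complex.abs (P u + (g u - P u)) := by ring_nf
      _ ≤ Complex.abs (P u) + Complex.abs (g u - P u) := Complex.abs.add_le _ _
      _ ≤ Mp + C1 * Complex.abs u ^ (L+1) := add_le_add (hPbd u hu) (hgP u hu)
      _ ≤ Mp + C1 * 1 := by
          have h1 : Complex.abs u ^ (L+1) ≤ 1 := pow_le_one₀ (Complex.abs.nonneg _) (hu.trans hδ1)
          have := mul_le_mul_of_nonneg_left h1 hC1
          linarith
      _ = Mp + C1 := by ring
  set T := (Finset.range (L + 1) ×ˢ Finset.range (L + 1)).filter (fun p : ℕ×ℕ => ¬ p.1 + p.2 ≤ L) with hTdef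
  set MT : ℝ := ∑ q ∈ T, |b q.1| * |b q.2| with hMTdef
  have hMT0 : 0 ≤ MT := Finset.sum_nonneg fun q _ => mul_nonneg (abs_nonneg _) (abs_nonneg _)
  refine ⟨b, hb0, δ, C1*(Mp+C1) + Mp*C1 + MT, hδpos, hδ1, by positivity, ?_⟩
  intro u hu
  set term : ℕ×ℕ → ℂ := fun q => ((b q.1 * b q.2 : ℝ) : ℂ) * u ^ q.1 * ((starRingEnd ℂ) u) ^ q.2 with htermdef
  have habs1 : Complex.abs u ≤ 1 := hu.trans hδ1
  have hconjP : (starRingEnd ℂ) (P u) = ∑ k ∈ Finset.range (L+1), (b k : ℂ) * ((starRingEnd ℂ) u)^k := by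
    rw [hPdef]
    simp [map_sum, map_mul, map_pow, Complex.conj_ofReal]
  have hprod : P u * (starRingEnd ℂ) (P u)
      = ∑ q ∈ (Finset.range (L + 1) ×ˢ Finset.range (L + 1)), term q := by
    rw [hconjP, hPdef]
    rw [Finset.sum_mul_sum]
    rw [Finset.sum_product]
    refine Finset.sum_congr rfl fun j _ => Finset.sum_congr rfl fun k _ => ?_
    simp only [htermdef]
    push_cast
    ring
  have hsplit : ∑ q ∈ (Finset.range (L + 1) ×ˢ Finset.range (L + 1)), term q
      = (∑ q ∈ (Finset.range (L + 1) ×ˢ Finset.range (L + 1)).filter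
          (fun p : ℕ×ℕ => p.1 + p.2 ≤ L), term q) + ∑ q ∈ T, term q :=
    (Finset.sum_filter_add_sum_filter_not _ _ _).symm
  have hdecomp : ((Complex.abs (1 - u) ^ (2 * γ) : ℝ) : ℂ) -
      ∑ q ∈ (Finset.range (L + 1) ×ˢ Finset.range (L + 1)).filter
          (fun p : ℕ×ℕ => p.1 + p.2 ≤ L), term q
      = ((g u - P u) * (starRingEnd ℂ) (g u)
          + P u * ((starRingEnd ℂ) (g u) - (starRingEnd ℂ) (P u))) + ∑ q ∈ T, term q := by
    have hW := W_eq γ u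
    have : ((Complex.abs (1 - u) ^ (2 * γ) : ℝ) : ℂ) = g u * (starRingEnd ℂ) (g u) := hW
    rw [this]
    have h2 : (∑ q ∈ (Finset.range (L + 1) ×ˢ Finset.range (L + 1)).filter
          (fun p : ℕ×ℕ => p.1 + p.2 ≤ L), term q)
        = P u * (starRingEnd ℂ) (P u) - ∑ q ∈ T, term q := by
      rw [hprod, hsplit]; ring
    rw [h2]
    ring
  have hTbd : Complex.abs (∑ q ∈ T, term q) ≤ MT * Complex.abs u ^ (L+1) := by
    rw [hMTdef, Finset.sum_mul]
    refine (Complex.abs.sum_le _ _).trans (Finset.sum_le_sum fun q hq => ?_)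
    have hqL : L + 1 ≤ q.1 + q.2 := by
      have := (Finset.mem_filter.mp hq).2
      omega
    simp only [htermdef, map_mul, map_pow, Complex.abs_ofReal, Complex.abs_conj]
    rw [abs_mul, mul_assoc, ← pow_add]
    exact mul_le_mul_of_nonneg_left
      (pow_le_pow_of_le_one (Complex.abs.nonneg _) habs1 hqL) (mul_nonneg (abs_nonneg _) (abs_nonneg _))
  calc Complex.abs (((Complex.abs (1 - u) ^ (2 * γ) : ℝ) : ℂ) -
      ∑ q ∈ (Finset.range (L + 1) ×ˢ Finset.range (L + 1)).filter
          (fun p : ℕ×ℕ => p.1 + p.2 ≤ L), term q)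
      ≤ Complex.abs ((g u - P u) * (starRingEnd ℂ) (g u))
        + Complex.abs (P u * ((starRingEnd ℂ) (g u) - (starRingEnd ℂ) (P u)))
        + Complex.abs (∑ q ∈ T, term q) := by
        rw [hdecomp]
        refine (Complex.abs.add_le _ _).trans ?_
        exact add_le_add_left (Complex.abs.add_le _ _) _
    _ ≤ C1 * Complex.abs u ^ (L+1) * (Mp + C1) + Mp * (C1 * Complex.abs u ^ (L+1))
        + MT * Complex.abs u ^ (L+1) := by
        refine add_le_add (add_le_add ?_ ?_) hTbd
        · rw [map_mul, Complex.abs_conj]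
          exact mul_le_mul (hgP u hu) (hgbd u hu) (Complex.abs.nonneg _) (by positivity)
        · rw [map_mul, ← map_sub, Complex.abs_conj]
          exact mul_le_mul (hPbd u hu) (hgP u hu) (Complex.abs.nonneg _) hMp0
    _ = (C1*(Mp+C1) + Mp*C1 + MT) * Complex.abs u ^ (L+1) := by ring

end MPCAux

open Complex Finset

set_option maxHeartbeats 1000000

/-- Asymptotic expansion in `1/a` of integrals of Schwartz functions against the moving
power weight `|1 − z/a|^{2γ}`: there are real coefficients `c_{j,k}` depending only on
`γ` and `L` — namely the Taylor coefficients at `u = 0` of `u ↦ |1−u|^{2γ}`, characterised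
by the local Taylor bound below — such that for every Schwartz function `f`,
`∫ |1−z/a|^{2γ} f dA = ∫ f dA + ∑_{1 ≤ j+k ≤ L} c_{j,k} a^{−j−k} ∫ z^j conj(z)^k f dA
  + O(a^{−L−1})` as `a → ∞`. -/
theorem moving_point_charge_expansion (γ : ℝ) (hγ : 0 ≤ γ) (L : ℕ) :
    ∃ c : ℕ → ℕ → ℝ,
      c 0 0 = 1 ∧
      (∃ δ : ℝ, 0 < δ ∧ ∃ Cδ : ℝ, ∀ u : ℂ, ‖u‖ ≤ δ →
        ‖(((‖1 - u‖ ^ (2 * γ) : ℝ) : ℂ) -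
          ∑ p ∈ (Finset.range (L + 1) ×ˢ Finset.range (L + 1)).filter
              (fun p => p.1 + p.2 ≤ L),
            ((c p.1 p.2 : ℝ) : ℂ) * u ^ p.1 * ((starRingEnd ℂ) u) ^ p.2)‖
          ≤ Cδ * ‖u‖ ^ (L + 1)) ∧
      ∀ f : SchwartzMap ℂ ℂ, ∃ C : ℝ, 0 < C ∧ ∃ a₀ : ℝ, 1 ≤ a₀ ∧
        ∀ a : ℝ, a₀ ≤ a →
          ‖
            ((∫ z : ℂ, ((‖1 - z / (a : ℂ)‖ ^ (2 * γ) : ℝ) : ℂ) * f z ∂dA)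
              - (∫ z : ℂ, f z ∂dA)
              - ∑ p ∈ (Finset.range (L + 1) ×ˢ Finset.range (L + 1)).filter
                  (fun p => 1 ≤ p.1 + p.2 ∧ p.1 + p.2 ≤ L),
                  ((c p.1 p.2 / a ^ (p.1 + p.2) : ℝ) : ℂ) *
                    ∫ z : ℂ, z ^ p.1 * ((starRingEnd ℂ) z) ^ p.2 * f z ∂dA)‖
            ≤ C / a ^ (L + 1) := by
  show ∃ c : ℕ → ℕ → ℝ,
    c 0 0 = 1 ∧
    (∃ δ : ℝ, 0 < δ ∧ ∃ Cδ : ℝ, ∀ u : ℂ, Complex.abs u ≤ δ →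
      Complex.abs (((Complex.abs (1 - u) ^ (2 * γ) : ℝ) : ℂ) -
        ∑ p ∈ (Finset.range (L + 1) ×ˢ Finset.range (L + 1)).filter
            (fun p => p.1 + p.2 ≤ L),
          ((c p.1 p.2 : ℝ) : ℂ) * u ^ p.1 * ((starRingEnd ℂ) u) ^ p.2)
        ≤ Cδ * Complex.abs u ^ (L + 1)) ∧
    ∀ f : SchwartzMap ℂ ℂ, ∃ C : ℝ, 0 < C ∧ ∃ a₀ : ℝ, 1 ≤ a₀ ∧
      ∀ a : ℝ, a₀ ≤ a →
        Complex.abs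
          ((∫ z : ℂ, ((Complex.abs (1 - z / (a : ℂ)) ^ (2 * γ) : ℝ) : ℂ) * f z ∂dA)
            - (∫ z : ℂ, f z ∂dA)
            - ∑ p ∈ (Finset.range (L + 1) ×ˢ Finset.range (L + 1)).filter
                (fun p => 1 ≤ p.1 + p.2 ∧ p.1 + p.2 ≤ L),
                ((c p.1 p.2 / a ^ (p.1 + p.2) : ℝ) : ℂ) *
                  ∫ z : ℂ, z ^ p.1 * ((starRingEnd ℂ) z) ^ p.2 * f z ∂dA)
          ≤ C / a ^ (L + 1)
  obtain ⟨b, hb0, δ, Cδ, hδpos, hδ1, hCδ0, hT⟩ := taylor_bound γ L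
  set S := (Finset.range (L + 1) ×ˢ Finset.range (L + 1)).filter
      (fun p : ℕ×ℕ => p.1 + p.2 ≤ L) with hSdef
  refine ⟨fun j k => b j * b k, by simp [hb0], ⟨δ, hδpos, Cδ, hT⟩, ?_⟩
  intro f
  -- constants
  set m : ℕ := Nat.ceil (2*γ) with hmdef
  have hm : 2*γ ≤ (m:ℝ) := Nat.le_ceil _
  set N : ℕ := m + 2*L + (L+1) with hNdef
  set Mq : ℝ := ∑ q ∈ S, |b q.1| * |b q.2| with hMqdef
  have hMq0 : 0 ≤ Mq := Finset.sum_nonneg fun q _ => mul_nonneg (abs_nonneg _) (abs_nonneg _)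
  set K : ℝ := max Cδ ((1+Mq)/δ^(L+1)) with hKdef
  have hK0 : 0 ≤ K := le_trans hCδ0 (le_max_left _ _)
  -- basic pointwise bounds
  have habs_sum : ∀ (u : ℂ) (R : ℝ), 1 ≤ R → Complex.abs u ≤ R →
      Complex.abs (∑ q ∈ S, ((b q.1 * b q.2 : ℝ) : ℂ) * u ^ q.1 * ((starRingEnd ℂ) u) ^ q.2)
        ≤ Mq * R^(2*L) := by
    intro u R hR hu
    have hR0 : 0 ≤ R := le_trans zero_le_one hR
    rw [hMqdef, Finset.sum_mul]
    refine (Complex.abs.sum_le _ _).trans (Finset.sum_le_sum fun q hq => ?_)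
    obtain ⟨hmem, hle⟩ := Finset.mem_filter.mp hq
    simp only [map_mul, map_pow, Complex.abs_ofReal, Complex.abs_conj, abs_mul]
    rw [mul_assoc, ← pow_add]
    refine mul_le_mul_of_nonneg_left ?_ (mul_nonneg (abs_nonneg _) (abs_nonneg _))
    calc Complex.abs u ^ (q.1+q.2) ≤ R ^ (q.1+q.2) :=
          pow_le_pow_left₀ (Complex.abs.nonneg _) hu _
      _ ≤ R^(2*L) := by
          refine pow_le_pow_right₀ hR ?_
          have := Finset.mem_product.mp hmem
          simp only [Finset.mem_range] at this
          omega
  -- weight bound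
  have hWbd : ∀ (u : ℂ) (R : ℝ), 1 ≤ R → Complex.abs u ≤ R - 1 →
      Complex.abs (((Complex.abs (1 - u) ^ (2 * γ) : ℝ) : ℂ)) ≤ R ^ m := by
    intro u R hR hu
    rw [Complex.abs_ofReal, _root_.abs_of_nonneg (Real.rpow_nonneg (Complex.abs.nonneg _) _)]
    have h1 : Complex.abs (1 - u) ≤ R := by
      calc Complex.abs (1 - u) ≤ Complex.abs 1 + Complex.abs u := by
            have h := Complex.abs.add_le 1 (-u)
            rw [AbsoluteValue.map_neg, ← sub_eq_add_neg] at h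
            exact h
        _ ≤ 1 + (R - 1) := by
            simp only [map_one]
            exact add_le_add_right hu _
        _ = R := by ring
    calc Complex.abs (1 - u) ^ (2*γ) ≤ R ^ (2*γ) :=
          Real.rpow_le_rpow (Complex.abs.nonneg _) h1 (by linarith)
      _ ≤ R ^ (m:ℝ) := Real.rpow_le_rpow_of_exponent_le hR hm
      _ = R ^ m := Real.rpow_natCast R m
  -- KEY pointwise estimate
  have hKEY : ∀ a : ℝ, 1 ≤ a → ∀ z : ℂ,
      Complex.abs (((Complex.abs (1 - z / (a:ℂ)) ^ (2 * γ) : ℝ) : ℂ)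
        - ∑ q ∈ S, ((b q.1 * b q.2 : ℝ) : ℂ) * (z/(a:ℂ)) ^ q.1
            * ((starRingEnd ℂ) (z/(a:ℂ))) ^ q.2)
      ≤ K * (1 + Complex.abs z) ^ N / a ^ (L+1) := by
    intro a ha z
    have ha0 : (0:ℝ) < a := lt_of_lt_of_le one_pos ha
    have haC : (a:ℂ) ≠ 0 := by exact_mod_cast ne_of_gt ha0
    set u : ℂ := z / (a:ℂ) with hudef
    have huabs : Complex.abs u = Complex.abs z / a := by
      rw [hudef, map_div₀, Complex.abs_ofReal, _root_.abs_of_pos ha0]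
    have huz : Complex.abs u ≤ Complex.abs z :=
      huabs ▸ div_le_self (Complex.abs.nonneg _) ha
    have hz1 : (1:ℝ) ≤ 1 + Complex.abs z := le_add_of_nonneg_right (Complex.abs.nonneg _)
    have hzpow : ∀ i j : ℕ, i ≤ j → (1 + Complex.abs z) ^ i ≤ (1 + Complex.abs z) ^ j :=
      fun i j hij => pow_le_pow_right₀ hz1 hij
    have hapow : (0:ℝ) < a ^ (L+1) := pow_pos ha0 _
    rcases le_or_gt (Complex.abs u) δ with hcase | hcase
    · -- Taylor region
      refine (hT u hcase).trans ?_
      rw [huabs, div_pow, mul_div_assoc]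
      gcongr
      · exact le_max_left _ _
      · calc Complex.abs z ^ (L+1) ≤ (1+Complex.abs z) ^ (L+1) :=
              pow_le_pow_left₀ (Complex.abs.nonneg _) (by linarith) _
          _ ≤ (1+Complex.abs z) ^ N := hzpow _ _ (by omega)
    · -- outer region
      have hδa : δ * a < Complex.abs z := by
        rw [huabs] at hcase
        calc δ * a < (Complex.abs z / a) * a := mul_lt_mul_of_pos_right hcase ha0
          _ = Complex.abs z := by field_simp
      have hfrac : 1 ≤ (1 + Complex.abs z) / (δ * a) := by
        rw [le_div_iff₀ (by positivity)]
        nlinarith [Complex.abs.nonneg z]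
      have hWb := hWbd u (1 + Complex.abs z) hz1 (by rw [add_sub_cancel_left]; exact huz)
      have hSb := habs_sum u (1 + Complex.abs z) hz1 (huz.trans (by linarith))
      have hbd1 : Complex.abs (((Complex.abs (1 - u) ^ (2 * γ) : ℝ) : ℂ)
            - ∑ q ∈ S, ((b q.1 * b q.2 : ℝ) : ℂ) * u ^ q.1 * ((starRingEnd ℂ) u) ^ q.2)
          ≤ (1 + Mq) * (1 + Complex.abs z) ^ (m + 2*L) := by
        have htri : Complex.abs (((Complex.abs (1 - u) ^ (2 * γ) : ℝ) : ℂ)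
              - ∑ q ∈ S, ((b q.1 * b q.2 : ℝ) : ℂ) * u ^ q.1 * ((starRingEnd ℂ) u) ^ q.2)
            ≤ Complex.abs (((Complex.abs (1 - u) ^ (2 * γ) : ℝ) : ℂ))
              + Complex.abs (∑ q ∈ S, ((b q.1 * b q.2 : ℝ) : ℂ) * u ^ q.1
                  * ((starRingEnd ℂ) u) ^ q.2) := by
          simpa [sub_eq_add_neg] using Complex.abs.add_le
            (((Complex.abs (1 - u) ^ (2 * γ) : ℝ) : ℂ))
            (-(∑ q ∈ S, ((b q.1 * b q.2 : ℝ) : ℂ) * u ^ q.1 * ((starRingEnd ℂ) u) ^ q.2))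
        have h1 : (1 + Complex.abs z) ^ m ≤ (1 + Complex.abs z) ^ (m + 2*L) :=
          hzpow _ _ (by omega)
        have h2 : (1 + Complex.abs z) ^ (2*L) ≤ (1 + Complex.abs z) ^ (m + 2*L) :=
          hzpow _ _ (by omega)
        have h3 : (0:ℝ) < (1 + Complex.abs z) ^ (m + 2*L) := by positivity
        nlinarith [hWb, hSb]
      refine hbd1.trans ?_
      have hstep : (1 + Mq) * (1 + Complex.abs z) ^ (m + 2*L)
          ≤ ((1 + Mq) * (1 + Complex.abs z) ^ (m + 2*L)) * ((1 + Complex.abs z) / (δ * a)) ^ (L+1) :=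
        le_mul_of_one_le_right (by positivity) (one_le_pow₀ hfrac)
      refine hstep.trans ?_
      have heq : ((1 + Mq) * (1 + Complex.abs z) ^ (m + 2*L)) * ((1 + Complex.abs z) / (δ * a)) ^ (L+1)
          = ((1+Mq)/δ^(L+1)) * (1 + Complex.abs z) ^ N / a ^ (L+1) := by
        rw [hNdef, div_pow, mul_pow, pow_add ((1:ℝ) + Complex.abs z) (m+2*L) (L+1)]
        field_simp
      rw [heq]
      gcongr
      exact le_max_right _ _
  -- integrability infrastructure
  have int_poly : ∀ n : ℕ, Integrable (fun z : ℂ => (1+‖z‖)^n * ‖f z‖) volume := by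
    intro n
    have he : (fun z : ℂ => (1+‖z‖)^n * ‖f z‖)
        = fun z => ∑ i ∈ Finset.range (n+1), (n.choose i : ℝ) * (‖z‖^i * ‖f z‖) := by
      funext z
      rw [add_comm (1:ℝ), add_pow, Finset.sum_mul]
      refine Finset.sum_congr rfl fun i _ => ?_
      rw [one_pow]
      ring
    rw [he]
    exact integrable_finset_sum _ fun i _ => ((f.integrable_pow_mul volume i).const_mul _)
  have int_dom : ∀ (h : ℂ → ℂ) (n : ℕ) (K' : ℝ), Continuous h →
      (∀ z, ‖h z‖ ≤ K' * ((1+‖z‖)^n * ‖f z‖)) → Integrable h dA := by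
    intro h n K' hc hb
    have hvol : Integrable h volume :=
      Integrable.mono' ((int_poly n).const_mul K') hc.aestronglyMeasurable (ae_of_all _ hb)
    exact hvol.smul_measure ENNReal.ofReal_ne_top
  have hnormabs : ∀ z : ℂ, ‖z‖ = Complex.abs z := fun z => Complex.norm_eq_abs z
  have hJ0 : (0:ℝ) ≤ ∫ z : ℂ, (1+‖z‖)^N * ‖f z‖ ∂dA :=
    integral_nonneg fun z => by positivity
  refine ⟨K * (∫ z : ℂ, (1+‖z‖)^N * ‖f z‖ ∂dA) + 1, by positivity, 1, le_refl 1, ?_⟩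
  intro a ha
  have ha0 : (0:ℝ) < a := lt_of_lt_of_le one_pos ha
  have haC : (a:ℂ) ≠ 0 := by exact_mod_cast ne_of_gt ha0
  have hapow : (0:ℝ) < a ^ (L+1) := pow_pos ha0 _
  have huza : ∀ z : ℂ, Complex.abs (z/(a:ℂ)) ≤ Complex.abs z := by
    intro z
    rw [map_div₀, Complex.abs_ofReal, _root_.abs_of_pos ha0]
    exact div_le_self (Complex.abs.nonneg _) ha
  -- continuity of the weight
  have contW : Continuous (fun z : ℂ => ((Complex.abs (1 - z/(a:ℂ)) ^ (2*γ) : ℝ) : ℂ)) := by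
    apply Complex.continuous_ofReal.comp
    apply Continuous.rpow_const
    · exact Complex.continuous_abs.comp (continuous_const.sub (continuous_id.div_const _))
    · intro z
      right
      positivity
  -- integrability of the monomial integrands
  have iA : ∀ q : ℕ×ℕ, Integrable (fun z : ℂ => z^q.1 * ((starRingEnd ℂ) z)^q.2 * f z) dA := by
    intro q
    refine int_dom _ (q.1+q.2) 1 ?_ ?_
    · exact ((continuous_pow q.1).mul ((Complex.continuous_conj).pow q.2)).mul f.continuous
    · intro z
      rw [one_mul, norm_mul, norm_mul, norm_pow, norm_pow, RCLike.norm_conj, ← pow_add]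
      refine mul_le_mul_of_nonneg_right ?_ (norm_nonneg _)
      exact pow_le_pow_left₀ (norm_nonneg _) (by linarith [norm_nonneg z]) _
  -- integrability of the weight integrand
  have iW : Integrable (fun z : ℂ => ((Complex.abs (1 - z/(a:ℂ)) ^ (2*γ):ℝ):ℂ) * f z) dA := by
    refine int_dom _ m 1 (contW.mul f.continuous) ?_
    intro z
    rw [one_mul, norm_mul]
    refine mul_le_mul_of_nonneg_right ?_ (norm_nonneg _)
    rw [hnormabs]
    refine hWbd (z/(a:ℂ)) (1 + Complex.abs z)
      (le_add_of_nonneg_right (Complex.abs.nonneg _)) ?_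
    rw [add_sub_cancel_left]
    exact huza z
  -- integrability of each polynomial-term integrand
  have iTm : ∀ q ∈ S, Integrable (fun z : ℂ => ((b q.1*b q.2:ℝ):ℂ) * (z/(a:ℂ))^q.1
      * ((starRingEnd ℂ) (z/(a:ℂ)))^q.2 * f z) dA := by
    intro q hq
    refine int_dom _ (2*L) |b q.1*b q.2| ?_ ?_
    · refine ((continuous_const.mul ((continuous_id.div_const _).pow q.1)).mul
        ((Complex.continuous_conj.comp (continuous_id.div_const _)).pow q.2)).mul f.continuous
    · intro z
      rw [norm_mul, norm_mul, norm_mul, norm_pow, norm_pow, RCLike.norm_conj,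
        hnormabs ((b q.1*b q.2:ℝ):ℂ), Complex.abs_ofReal]
      have key : ‖z/(a:ℂ)‖^q.1 * ‖z/(a:ℂ)‖^q.2 ≤ (1+‖z‖)^(2*L) := by
        rw [← pow_add]
        calc ‖z/(a:ℂ)‖^(q.1+q.2) ≤ (1+‖z‖)^(q.1+q.2) := by
              refine pow_le_pow_left₀ (norm_nonneg _) ?_ _
              rw [hnormabs, hnormabs]
              exact (huza z).trans (by linarith [Complex.abs.nonneg z])
          _ ≤ (1+‖z‖)^(2*L) := by
              refine pow_le_pow_right₀ (by linarith [norm_nonneg z]) ?_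
              have := Finset.mem_product.mp (Finset.mem_filter.mp hq).1
              simp only [Finset.mem_range] at this
              omega
      calc |b q.1*b q.2| * ‖z/(a:ℂ)‖^q.1 * ‖z/(a:ℂ)‖^q.2 * ‖f z‖
          = |b q.1*b q.2| * ((‖z/(a:ℂ)‖^q.1 * ‖z/(a:ℂ)‖^q.2) * ‖f z‖) := by ring
        _ ≤ |b q.1*b q.2| * ((1+‖z‖)^(2*L) * ‖f z‖) :=
            mul_le_mul_of_nonneg_left
              (mul_le_mul_of_nonneg_right key (norm_nonneg _)) (abs_nonneg _)
  -- step 1: fold ∫ f into the full sum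
  have hS1 : S.filter (fun q : ℕ×ℕ => 1 ≤ q.1 + q.2)
      = (Finset.range (L + 1) ×ˢ Finset.range (L + 1)).filter
          (fun p : ℕ×ℕ => 1 ≤ p.1 + p.2 ∧ p.1 + p.2 ≤ L) := by
    ext q
    simp only [hSdef, Finset.mem_filter, Finset.mem_product, Finset.mem_range]
    tauto
  have hS2 : S.filter (fun q : ℕ×ℕ => ¬ 1 ≤ q.1 + q.2) = {((0:ℕ),(0:ℕ))} := by
    ext q
    simp only [hSdef, Finset.mem_filter, Finset.mem_product, Finset.mem_range,
      Finset.mem_singleton, Prod.ext_iff]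
    omega
  have hsplit : (∑ q ∈ S, ((b q.1 * b q.2 / a^(q.1+q.2) : ℝ):ℂ)
        * ∫ z : ℂ, z^q.1 * ((starRingEnd ℂ) z)^q.2 * f z ∂dA)
      = (∑ q ∈ (Finset.range (L + 1) ×ˢ Finset.range (L + 1)).filter
            (fun p : ℕ×ℕ => 1 ≤ p.1 + p.2 ∧ p.1 + p.2 ≤ L),
          ((b q.1 * b q.2 / a^(q.1+q.2) : ℝ):ℂ)
            * ∫ z : ℂ, z^q.1 * ((starRingEnd ℂ) z)^q.2 * f z ∂dA)
        + ∫ z : ℂ, f z ∂dA := by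
    rw [← Finset.sum_filter_add_sum_filter_not S (fun q : ℕ×ℕ => 1 ≤ q.1 + q.2), hS1, hS2,
      Finset.sum_singleton]
    congr 1
    have h00 : ((b 0 * b 0 / a^(0+0) : ℝ):ℂ) = 1 := by
      rw [hb0]
      norm_num
    rw [h00, one_mul]
    refine integral_congr_ae (ae_of_all _ fun z => ?_)
    norm_num
  -- step 2: pull constants inside the integrals
  have hIq : ∀ q ∈ S, ((b q.1 * b q.2 / a^(q.1+q.2) : ℝ):ℂ)
        * ∫ z : ℂ, z^q.1 * ((starRingEnd ℂ) z)^q.2 * f z ∂dA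
      = ∫ z : ℂ, ((b q.1*b q.2:ℝ):ℂ) * (z/(a:ℂ))^q.1
          * ((starRingEnd ℂ) (z/(a:ℂ)))^q.2 * f z ∂dA := by
    intro q hq
    rw [← integral_const_mul]
    refine integral_congr_ae (ae_of_all _ fun z => ?_)
    simp only [map_div₀, Complex.conj_ofReal, div_pow]
    push_cast
    field_simp
    ring
  -- step 3: sum of integrals = integral of polynomial times f
  have hsum_int : (∑ q ∈ S, ((b q.1 * b q.2 / a^(q.1+q.2) : ℝ):ℂ)
        * ∫ z : ℂ, z^q.1 * ((starRingEnd ℂ) z)^q.2 * f z ∂dA)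
      = ∫ z : ℂ, (∑ q ∈ S, ((b q.1*b q.2:ℝ):ℂ) * (z/(a:ℂ))^q.1
          * ((starRingEnd ℂ) (z/(a:ℂ)))^q.2) * f z ∂dA := by
    rw [Finset.sum_congr rfl hIq, ← integral_finset_sum S iTm]
    refine integral_congr_ae (ae_of_all _ fun z => ?_)
    simp only [Finset.sum_mul]
  -- step 4: collapse the error term to a single integral
  have hmain : (∫ z : ℂ, ((Complex.abs (1 - z / (a:ℂ)) ^ (2 * γ) : ℝ) : ℂ) * f z ∂dA)
        - (∫ z : ℂ, f z ∂dA)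
        - (∑ q ∈ (Finset.range (L + 1) ×ˢ Finset.range (L + 1)).filter
            (fun p : ℕ×ℕ => 1 ≤ p.1 + p.2 ∧ p.1 + p.2 ≤ L),
          ((b q.1 * b q.2 / a^(q.1+q.2) : ℝ):ℂ)
            * ∫ z : ℂ, z^q.1 * ((starRingEnd ℂ) z)^q.2 * f z ∂dA)
      = ∫ z : ℂ, (((Complex.abs (1 - z / (a:ℂ)) ^ (2 * γ) : ℝ) : ℂ)
          - ∑ q ∈ S, ((b q.1*b q.2:ℝ):ℂ) * (z/(a:ℂ))^q.1
              * ((starRingEnd ℂ) (z/(a:ℂ)))^q.2) * f z ∂dA := by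
    have iQf : Integrable (fun z : ℂ => (∑ q ∈ S, ((b q.1*b q.2:ℝ):ℂ) * (z/(a:ℂ))^q.1
        * ((starRingEnd ℂ) (z/(a:ℂ)))^q.2) * f z) dA := by
      have := integrable_finset_sum S iTm
      refine this.congr (ae_of_all _ fun z => ?_)
      simp only [Finset.sum_mul]
    have h4 : ∫ z : ℂ, (((Complex.abs (1 - z / (a:ℂ)) ^ (2 * γ) : ℝ) : ℂ)
          - ∑ q ∈ S, ((b q.1*b q.2:ℝ):ℂ) * (z/(a:ℂ))^q.1
              * ((starRingEnd ℂ) (z/(a:ℂ)))^q.2) * f z ∂dA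
        = (∫ z : ℂ, ((Complex.abs (1 - z / (a:ℂ)) ^ (2 * γ) : ℝ) : ℂ) * f z ∂dA)
          - ∫ z : ℂ, (∑ q ∈ S, ((b q.1*b q.2:ℝ):ℂ) * (z/(a:ℂ))^q.1
              * ((starRingEnd ℂ) (z/(a:ℂ)))^q.2) * f z ∂dA := by
      rw [← integral_sub iW iQf]
      refine integral_congr_ae (ae_of_all _ fun z => ?_)
      simp only [Pi.sub_apply]
      ring
    rw [h4, ← hsum_int, hsplit]
    ring
  rw [hmain]
  -- step 5: the final bound
  have hb1 : Complex.abs (∫ z : ℂ, (((Complex.abs (1 - z / (a:ℂ)) ^ (2 * γ) : ℝ) : ℂ)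
        - ∑ q ∈ S, ((b q.1*b q.2:ℝ):ℂ) * (z/(a:ℂ))^q.1
            * ((starRingEnd ℂ) (z/(a:ℂ)))^q.2) * f z ∂dA)
      ≤ ∫ z : ℂ, (K / a^(L+1)) * ((1+‖z‖)^N * ‖f z‖) ∂dA := by
    rw [← hnormabs]
    refine (norm_integral_le_integral_norm _).trans ?_
    have iErr : Integrable (fun z : ℂ => ‖(((Complex.abs (1 - z / (a:ℂ)) ^ (2 * γ) : ℝ) : ℂ)
        - ∑ q ∈ S, ((b q.1*b q.2:ℝ):ℂ) * (z/(a:ℂ))^q.1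
            * ((starRingEnd ℂ) (z/(a:ℂ)))^q.2) * f z‖) dA := by
      refine Integrable.norm ?_
      have iQf : Integrable (fun z : ℂ => (∑ q ∈ S, ((b q.1*b q.2:ℝ):ℂ) * (z/(a:ℂ))^q.1
          * ((starRingEnd ℂ) (z/(a:ℂ)))^q.2) * f z) dA := by
        have := integrable_finset_sum S iTm
        refine this.congr (ae_of_all _ fun z => ?_)
        simp only [Finset.sum_mul]
      refine (iW.sub iQf).congr (ae_of_all _ fun z => ?_)
      simp only [Pi.sub_apply]
      ring
    refine integral_mono iErr (((int_poly N).const_mul (K / a^(L+1))).smul_measure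
      ENNReal.ofReal_ne_top) fun z => ?_
    rw [norm_mul]
    have hk := hKEY a ha z
    rw [← hnormabs] at hk
    calc ‖(((Complex.abs (1 - z / (a:ℂ)) ^ (2 * γ) : ℝ) : ℂ)
          - ∑ q ∈ S, ((b q.1*b q.2:ℝ):ℂ) * (z/(a:ℂ))^q.1
              * ((starRingEnd ℂ) (z/(a:ℂ)))^q.2)‖ * ‖f z‖
        ≤ (K * (1+‖z‖)^N / a^(L+1)) * ‖f z‖ :=
          mul_le_mul_of_nonneg_right hk (norm_nonneg _)
      _ = (K / a^(L+1)) * ((1+‖z‖)^N * ‖f z‖) := by ring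
  refine hb1.trans ?_
  rw [integral_const_mul]
  rw [div_mul_eq_mul_div, div_le_div_iff₀ hapow hapow]
  have : K * (∫ z : ℂ, (1+‖z‖)^N * ‖f z‖ ∂dA)
      ≤ K * (∫ z : ℂ, (1+‖z‖)^N * ‖f z‖ ∂dA) + 1 := by linarith
  nlinarith [hapow]
end
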